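/- arXiv:1212.4372 — 3 statements merged into one kernel-verified Lean document; each statement's English description precedes it below -/
import Mathlib

section
/- Let n > m > 0 and x ∈ Σ^{n+m-1} with the middle segment (x_m,...,x_n) consisting of distinct elements. Define i_L = max{j ∈ [m-1] : (x_j,...,x_n) has a duplicate} (0 if none) and i_R = min{j ∈ [m-1] : (x_m,...,x_{n+j}) has a duplicate} (m if none). Then the sliding-window element distinctness outputs satisfy ED_n^{⊞m}(x) = 0^{i_L}1^{m-i_L} ∧ 1^{i_R}0^{m-i_R} ∧ ED_{m-1}^{⊞m}(x_1,...,x_{m-1},x_{n+1},...,x_{n+m-1}), where ∧ is bitwise conjunction. -/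
/-- Let `n > m > 0`, `x ∈ Σ^{n+m-1}` (1-indexed) with distinct middle segment
`(x_m,…,x_n)`. With `i_L = max{j ∈ [m-1] : (x_j,…,x_n) has a duplicate}` (`0` if none),
`i_R = min{j ∈ [m-1] : (x_m,…,x_{n+j}) has a duplicate}` (`m` if none), and `y` the
concatenation `(x_1,…,x_{m-1},x_{n+1},…,x_{n+m-1})`, the `j`-th sliding-window
element-distinctness output (for `1 ≤ j ≤ m`) is the conjunction of the `j`-th bits of
`0^{i_L} 1^{m-i_L}`, `1^{i_R} 0^{m-i_R}`, and `ED_{m-1}^{⊞m}(y)`. -/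
theorem stmt10 {α : Type*} (x y : ℕ → α) (n m : ℕ) (hm : 0 < m) (hmn : m < n)
    (hmid : Set.InjOn x (Set.Icc m n))
    (hy : ∀ j, (j ≤ m - 1 → y j = x j) ∧ (m ≤ j → y j = x (n + j - m + 1)))
    (iL iR : ℕ)
    (hiL : IsGreatest (insert 0
      {j | j ∈ Set.Icc 1 (m - 1) ∧ ¬ Set.InjOn x (Set.Icc j n)}) iL)
    (hiR : IsLeast (insert m
      {j | j ∈ Set.Icc 1 (m - 1) ∧ ¬ Set.InjOn x (Set.Icc m (n + j))}) iR) :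
    ∀ j, 1 ≤ j → j ≤ m →
      (Set.InjOn x (Set.Icc j (j + n - 1)) ↔
        iL < j ∧ j ≤ iR ∧ Set.InjOn y (Set.Icc j (j + m - 2))) := by
  obtain ⟨hiL1, hiL2⟩ := hiL
  obtain ⟨hiR1, hiR2⟩ := hiR
  intro j hj1 hjm
  constructor
  · intro hinj
    refine ⟨?_, ?_, ?_⟩
    · -- iL < j
      by_contra h
      push_neg at h
      have h0 : iL ≠ 0 := by omega
      rcases hiL1 with h' | hS
      · exact h0 h'
      · exact hS.2 (hinj.mono (by
          intro z hz; simp only [Set.mem_Icc] at *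
          constructor <;> omega))
    · -- j ≤ iR
      by_contra h
      push_neg at h
      have h0 : iR ≠ m := by
        intro he
        have := hiR2 (Set.mem_insert m _)
        omega
      rcases hiR1 with h' | hS
      · exact h0 h'
      · refine hS.2 (hinj.mono ?_)
        intro z hz
        simp only [Set.mem_Icc, Set.mem_setOf_eq] at *
        obtain ⟨hS1, _⟩ := hS.1
        constructor <;> omega
    · -- InjOn y
      intro a ha b hb hab
      simp only [Set.mem_Icc] at ha hb
      rcases le_or_gt a (m-1) with haL | haR <;> rcases le_or_gt b (m-1) with hbL | hbR
      · rw [(hy a).1 haL, (hy b).1 hbL] at hab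
        exact hinj (by simp only [Set.mem_Icc]; omega) (by simp only [Set.mem_Icc]; omega) hab
      · rw [(hy a).1 haL, (hy b).2 (by omega)] at hab
        have := hinj (by simp only [Set.mem_Icc]; omega)
          (by simp only [Set.mem_Icc]; omega) hab
        omega
      · rw [(hy a).2 (by omega), (hy b).1 hbL] at hab
        have := hinj (by simp only [Set.mem_Icc]; omega)
          (by simp only [Set.mem_Icc]; omega) hab
        omega
      · rw [(hy a).2 (by omega), (hy b).2 (by omega)] at hab
        have := hinj (by simp only [Set.mem_Icc]; omega)
          (by simp only [Set.mem_Icc]; omega) hab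
        omega
  · rintro ⟨hL, hR, hy'⟩
    have key : ∀ a b, j ≤ a → a < b → b ≤ j + n - 1 → x a = x b → False := by
      intro a b ha hlt hb hab
      rcases le_or_gt b n with hbn | hbn
      · rcases le_or_gt m a with ham | ham
        · -- both in middle
          have := hmid (Set.mem_Icc.2 ⟨ham, by omega⟩) (Set.mem_Icc.2 ⟨by omega, hbn⟩) hab
          omega
        · -- a in left: duplicate in Icc a n, so a ≤ iL, but iL < j ≤ a
          have hmem : a ∈ {j | j ∈ Set.Icc 1 (m - 1) ∧ ¬ Set.InjOn x (Set.Icc j n)} := by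
            refine ⟨Set.mem_Icc.2 ⟨by omega, by omega⟩, ?_⟩
            intro hI
            have := hI (Set.mem_Icc.2 ⟨le_refl a, by omega⟩)
              (Set.mem_Icc.2 ⟨by omega, hbn⟩) hab
            omega
          have := hiL2 (Set.mem_insert_of_mem 0 hmem)
          omega
      · rcases le_or_gt a n with han | han
        · rcases le_or_gt m a with ham | ham
          · -- a middle, b right: duplicate in Icc m (n + (b-n))
            have hmem : (b - n) ∈ {j | j ∈ Set.Icc 1 (m - 1) ∧
                ¬ Set.InjOn x (Set.Icc m (n + j))} := by
              refine ⟨Set.mem_Icc.2 ⟨by omega, by omega⟩, ?_⟩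
              intro hI
              have := hI (Set.mem_Icc.2 ⟨ham, by omega⟩)
                (Set.mem_Icc.2 ⟨by omega, by omega⟩) hab
              omega
            have := hiR2 (Set.mem_insert_of_mem m hmem)
            omega
          · -- a left, b right: use y
            have hya : y a = x a := (hy a).1 (by omega)
            have hyb : y (b - n + m - 1) = x b := by
              rw [(hy (b - n + m - 1)).2 (by omega)]
              congr 1
              omega
            have heq : y a = y (b - n + m - 1) := by rw [hya, hyb]; exact hab
            have := hy' (show a ∈ Set.Icc j (j+m-2) from Set.mem_Icc.2 ⟨ha, by omega⟩)
              (show b - n + m - 1 ∈ Set.Icc j (j+m-2) from Set.mem_Icc.2 ⟨by omega, by omega⟩) heq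
            omega
        · -- both right: use y
          have hya : y (a - n + m - 1) = x a := by
            rw [(hy (a - n + m - 1)).2 (by omega)]; congr 1; omega
          have hyb : y (b - n + m - 1) = x b := by
            rw [(hy (b - n + m - 1)).2 (by omega)]; congr 1; omega
          have heq : y (a - n + m - 1) = y (b - n + m - 1) := by rw [hya, hyb]; exact hab
          have := hy' (show a - n + m - 1 ∈ Set.Icc j (j+m-2) from Set.mem_Icc.2 ⟨by omega, by omega⟩)
            (show b - n + m - 1 ∈ Set.Icc j (j+m-2) from Set.mem_Icc.2 ⟨by omega, by omega⟩) heq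
          omega
    intro a ha b hb hab
    simp only [Set.mem_Icc] at ha hb
    rcases lt_trichotomy a b with h | h | h
    · exact absurd hab (by intro hh; exact key a b ha.1 h hb.2 hh)
    · exact h
    · exact absurd hab (by intro hh; exact key b a hb.1 h ha.2 hh.symm)
end

section
/- With X the birthday random variable for uniform sampling with replacement from [n] (n ≥ 4), the second moment satisfies E[X²] ≤ 4n. -/
open Finset

private lemma sum_odd (k : ℕ) : ∑ m ∈ range k, (2 * m + 1) = k ^ 2 := by
  induction k with
  | zero => simp
  | succ k ih => rw [sum_range_succ, ih]; ring

private lemma card_inj (n m : ℕ) (hm : m ≤ n + 1) :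
    Fintype.card {f : Fin (n + 1) → Fin n //
        Function.Injective fun i : Fin m => f (Fin.castLE hm i)} =
      n.descFactorial m * n ^ (n + 1 - m) := by
  have e : {f : Fin (n + 1) → Fin n //
        Function.Injective fun i : Fin m => f (Fin.castLE hm i)} ≃
      {e : Fin m → Fin n // Function.Injective e} × (Fin (n + 1 - m) → Fin n) :=
    { toFun := fun f => (⟨fun i => f.1 (Fin.castLE hm i), f.2⟩,
        fun j => f.1 ⟨m + j, by omega⟩)
      invFun := fun p => ⟨fun i => if h : (i : ℕ) < m then p.1.1 ⟨i, h⟩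
          else p.2 ⟨(i : ℕ) - m, by omega⟩, by
        intro i j hij
        apply p.1.2
        simpa [Fin.coe_castLE, i.isLt, j.isLt] using hij⟩
      left_inv := by
        intro f
        ext i
        dsimp only
        by_cases h : (i : ℕ) < m
        · simp [h]
        · have hj : m + ((i : ℕ) - m) = (i : ℕ) := by omega
          simp [h, hj]
      right_inv := by
        intro p
        ext i
        · simp [i.isLt]
        · dsimp only
          have h : ¬ (m + (i : ℕ) < m) := by omega
          simp [h] }
  rw [Fintype.card_congr e, Fintype.card_prod,
    Fintype.card_congr (Equiv.subtypeInjectiveEquivEmbedding (Fin m) (Fin n)),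
    Fintype.card_embedding_eq, Fintype.card_fun]
  simp

/-- With `X` the birthday random variable (index of the first duplicate) for i.u.d.
samples from `[n]` (`n ≥ 4`), the second moment satisfies `E[X²] ≤ 4n`.  Since a
duplicate is guaranteed within `n + 1` samples, `X` is determined by the first
`n + 1` samples. -/
theorem stmt15 (n : ℕ) (hn : 4 ≤ n) (X : (Fin (n + 1) → Fin n) → ℕ)
    (hX : ∀ f, IsLeast {x : ℕ |
        ∃ i j : Fin (n + 1), (i : ℕ) < x ∧ (j : ℕ) < x ∧ i ≠ j ∧ f i = f j} (X f)) :
    (∑ f : Fin (n + 1) → Fin n, ((X f : ℝ)) ^ 2) / (n : ℝ) ^ (n + 1) ≤ 4 * n := by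
  have hn0 : 0 < n := by omega
  -- X f ≤ n + 1 always
  have hXle : ∀ f, X f ≤ n + 1 := by
    intro f
    obtain ⟨i, j, hij, hfij⟩ := Fintype.exists_ne_map_eq_of_card_lt f (by simp)
    exact (hX f).2 ⟨i, j, i.isLt, j.isLt, hij, hfij⟩
  -- tail characterization: m < X f ↔ f injective on first m coordinates
  have htail : ∀ (m : ℕ) (hm : m ≤ n + 1) (f : Fin (n + 1) → Fin n),
      m < X f ↔ Function.Injective fun i : Fin m => f (Fin.castLE hm i) := by
    intro m hm f
    constructor
    · intro h i j hij
      by_contra hne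
      have : X f ≤ m := (hX f).2 ⟨Fin.castLE hm i, Fin.castLE hm j,
        by simpa using i.isLt, by simpa using j.isLt,
        by simpa [Fin.ext_iff] using (Fin.val_ne_of_ne hne : (i:ℕ) ≠ j), hij⟩
      omega
    · intro hinj
      by_contra h
      push_neg at h
      obtain ⟨i, j, hiX, hjX, hij, hfij⟩ := (hX f).1
      have hi : (i : ℕ) < m := lt_of_lt_of_le hiX h
      have hj : (j : ℕ) < m := lt_of_lt_of_le hjX h
      have : (⟨(i : ℕ), hi⟩ : Fin m) = ⟨(j : ℕ), hj⟩ := by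
        apply hinj
        simpa [Fin.ext_iff] using (Fin.ext_iff.mp hfij)
      exact hij (Fin.ext (by simpa [Fin.ext_iff] using this))
  -- counting the tails
  have hcount : ∀ (m : ℕ), m ≤ n + 1 →
      (univ.filter fun f : Fin (n + 1) → Fin n => m < X f).card =
        n.descFactorial m * n ^ (n + 1 - m) := by
    intro m hm
    rw [← card_inj n m hm, Fintype.card_subtype]
    congr 1
    apply filter_congr
    intro f _
    simpa using htail m hm f
  -- the natural number bound
  have key : ∑ f : Fin (n + 1) → Fin n, (X f) ^ 2 ≤ 4 * n * n ^ (n + 1) := by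
    set a : ℕ → ℕ := fun m => n.descFactorial m * n ^ (n + 1 - m) with ha
    have ha0 : a 0 = n ^ (n + 1) := by simp [ha]
    have hrec : ∀ m ≤ n, m * a m + n * a (m + 1) = n * a m := by
      intro m hm
      have h1 : n + 1 - m = (n - m) + 1 := by omega
      have h2 : n + 1 - (m + 1) = n - m := by omega
      have hk : m + (n - m) = n := by omega
      simp only [ha, Nat.descFactorial_succ, h1, h2, pow_succ]
      set D := n.descFactorial m
      set P := n ^ (n - m)
      set k := n - m
      calc m * (D * (P * n)) + n * (k * D * P) = (m + k) * (n * D * P) := by ring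
        _ = n * (D * (P * n)) := by rw [hk]; ring
    have htel : ∀ k ≤ n + 1, (∑ m ∈ range k, m * a m) + n * a k = n * a 0 := by
      intro k
      induction k with
      | zero => simp
      | succ k ih =>
        intro hk
        have ihk := ih (by omega)
        rw [sum_range_succ]
        have := hrec k (by omega)
        omega
    have hsum1 : ∑ m ∈ range (n + 1), m * a m ≤ n * n ^ (n + 1) := by
      have := htel (n + 1) le_rfl
      rw [ha0] at this
      omega
    have hbnd : ∀ m ≤ n + 1, a m ≤ n ^ (n + 1) := by
      intro m hm
      calc a m ≤ n ^ m * n ^ (n + 1 - m) :=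
            Nat.mul_le_mul_right _ (Nat.descFactorial_le_pow n m)
        _ = n ^ (n + 1) := by rw [← pow_add]; congr 1; omega
    have hsum2 : ∑ m ∈ range (n + 1), a m ≤ (n + 1) * n ^ (n + 1) := by
      calc ∑ m ∈ range (n + 1), a m ≤ ∑ _m ∈ range (n + 1), n ^ (n + 1) :=
            Finset.sum_le_sum fun m hm => hbnd m (by simp at hm; omega)
        _ = (n + 1) * n ^ (n + 1) := by rw [Finset.sum_const]; simp [mul_comm]
    -- rewrite the sum of squares
    have hpt : ∀ f : Fin (n + 1) → Fin n,
        (X f) ^ 2 = ∑ m ∈ range (n + 1), if m < X f then 2 * m + 1 else 0 := by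
      intro f
      rw [← Finset.sum_filter]
      have : (range (n + 1)).filter (fun m => m < X f) = range (X f) := by
        ext m
        simp only [mem_filter, mem_range]
        have := hXle f
        omega
      rw [this, sum_odd]
    calc ∑ f : Fin (n + 1) → Fin n, (X f) ^ 2
        = ∑ f : Fin (n + 1) → Fin n, ∑ m ∈ range (n + 1),
            if m < X f then 2 * m + 1 else 0 := Finset.sum_congr rfl fun f _ => hpt f
      _ = ∑ m ∈ range (n + 1), ∑ f : Fin (n + 1) → Fin n,
            if m < X f then 2 * m + 1 else 0 := Finset.sum_comm
      _ = ∑ m ∈ range (n + 1), (2 * m + 1) * a m := by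
          apply Finset.sum_congr rfl
          intro m hm
          rw [← Finset.sum_filter, Finset.sum_const, smul_eq_mul,
            hcount m (by simp at hm; omega)]
          simp only [ha]
          ring
      _ = 2 * ∑ m ∈ range (n + 1), m * a m + ∑ m ∈ range (n + 1), a m := by
          rw [Finset.mul_sum, ← Finset.sum_add_distrib]
          apply Finset.sum_congr rfl
          intro m _
          ring
      _ ≤ 2 * (n * n ^ (n + 1)) + (n + 1) * n ^ (n + 1) := by
          have := hsum1; have := hsum2; omega
      _ ≤ 4 * n * n ^ (n + 1) := by nlinarith [Nat.one_le_iff_ne_zero.mpr (pow_ne_zero (n+1) (by omega : n ≠ 0))]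
  -- transfer to ℝ
  have hpow : (0 : ℝ) < (n : ℝ) ^ (n + 1) := by positivity
  rw [div_le_iff₀ hpow]
  calc (∑ f : Fin (n + 1) → Fin n, ((X f : ℝ)) ^ 2)
      = ((∑ f : Fin (n + 1) → Fin n, (X f) ^ 2 : ℕ) : ℝ) := by push_cast; rfl
    _ ≤ ((4 * n * n ^ (n + 1) : ℕ) : ℝ) := by exact_mod_cast key
    _ = 4 * (n : ℝ) * (n : ℝ) ^ (n + 1) := by push_cast; ring
end

section
/- Sorting reduces to sliding-window order statistics: given t values s_1,...,s_t ∈ {2,...,n-1}, form a string of length 2n-1 whose first n-t entries equal n, whose last n-1 entries equal 1, and whose remaining t entries are s_1,...,s_t. Then for i = 1,...,t, the t-th order statistic of the i-th window of length n equals the i-th largest element of {s_1,...,s_t}; hence the first t outputs of O_t^{⊞n} list the multiset {s_1,...,s_t} in decreasing-rank (i.e., sorted) order. -/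
/-- Sorting reduces to sliding-window order statistics: embed `t` values
`s_1,…,s_t ∈ {2,…,n-1}` into a string of length `2n-1` whose first `n-t` entries are
`n` and whose last `n-1` entries are `1` (0-indexed).  Then for `i = 1,…,t`, the `t`-th
smallest element of the `i`-th window of length `n` equals the `i`-th largest of the
`s_j`, i.e. the `(t-i+1)`-th smallest. -/
theorem stmt18 (n t : ℕ) (hn : 3 ≤ n) (ht : 1 ≤ t) (htn : 2 * t ≤ n + 1)
    (s : Fin t → ℕ) (hs : ∀ j, 2 ≤ s j ∧ s j ≤ n - 1)
    (x : ℕ → ℕ)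
    (hx1 : ∀ i, i < n - t → x i = n)
    (hx2 : ∀ j : Fin t, x (n - t + (j : ℕ)) = s j)
    (hx3 : ∀ i, n ≤ i → i < 2 * n - 1 → x i = 1) :
    ∀ i, 1 ≤ i → i ≤ t →
      ((Multiset.sort
          (((List.range n).map (fun k => x (i - 1 + k)) : List ℕ) : Multiset ℕ) (· ≤ ·)
        : List ℕ))[t - 1]!
        = ((Multiset.sort ((List.ofFn s : List ℕ) : Multiset ℕ) (· ≤ ·)
        : List ℕ))[t - i]! := by
  rintro i hi1 hit
  obtain ⟨j, rfl⟩ : ∃ j, i = j + 1 := ⟨i - 1, by omega⟩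
  set a := n - t - j with ha
  have hatj : a + t + j = n := by omega
  set sortedS : List ℕ := Multiset.sort ((List.ofFn s : List ℕ) : Multiset ℕ) (· ≤ ·)
    with hsortedS
  have hlenS : sortedS.length = t := by simp [hsortedS]
  have hmemS : ∀ b ∈ sortedS, 2 ≤ b ∧ b ≤ n - 1 := by
    intro b hb
    rw [hsortedS] at hb
    simp only [Multiset.mem_sort, Multiset.mem_coe, List.mem_ofFn] at hb
    obtain ⟨k, rfl⟩ := hb
    exact hs k
  have hWL : (List.range n).map (fun k => x (j + 1 - 1 + k))
      = List.replicate a n ++ List.ofFn s ++ List.replicate j 1 := by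
    apply List.ext_getElem
    · simp; omega
    · intro k h1 h2
      simp only [List.getElem_map, List.getElem_range]
      have hkn : k < n := by simpa using h1
      rcases lt_or_ge k a with hk | hk
      · rw [List.getElem_append_left (by simp; omega),
          List.getElem_append_left (by simpa using hk), List.getElem_replicate]
        exact hx1 _ (by omega)
      · rcases lt_or_ge k (a + t) with hk2 | hk2
        · rw [List.getElem_append_left (by simp; omega),
            List.getElem_append_right (by simpa using hk)]
          simp only [List.length_replicate, List.getElem_ofFn]
          have heq : j + 1 - 1 + k = n - t + (k - a) := by omega
          rw [heq, hx2 ⟨k - a, by omega⟩]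
        · rw [List.getElem_append_right (by simp; omega)]
          simp only [List.length_append, List.length_replicate, List.length_ofFn,
            List.getElem_replicate]
          exact hx3 _ (by omega) (by omega)
  have hsortR : List.Pairwise (· ≤ ·)
      (List.replicate j 1 ++ sortedS ++ List.replicate a n) := by
    show List.Pairwise _ _
    rw [List.pairwise_append, List.pairwise_append]
    refine ⟨⟨by simp, Multiset.pairwise_sort _ _, ?_⟩, by simp, ?_⟩
    · intro b hb c hc
      rw [List.eq_of_mem_replicate hb]
      exact le_trans (by norm_num) (hmemS c hc).1
    · intro b hb c hc
      rw [List.eq_of_mem_replicate hc]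
      rcases List.mem_append.mp hb with hb | hb
      · rw [List.eq_of_mem_replicate hb]; omega
      · exact le_trans (hmemS b hb).2 (by omega)
  have hS : ((sortedS : Multiset ℕ)) = ((List.ofFn s : List ℕ) : Multiset ℕ) := by
    rw [hsortedS]; exact Multiset.sort_eq _ _
  have hsortW : Multiset.sort
      (((List.range n).map (fun k => x (j + 1 - 1 + k)) : List ℕ) : Multiset ℕ) (· ≤ ·)
      = List.replicate j 1 ++ sortedS ++ List.replicate a n := by
    refine List.Perm.eq_of_pairwise' (Multiset.pairwise_sort _ _) hsortR ?_
    rw [← Multiset.coe_eq_coe, Multiset.sort_eq, hWL]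
    rw [← Multiset.coe_add, ← Multiset.coe_add, ← Multiset.coe_add, ← Multiset.coe_add, hS]
    abel
  rw [hsortW]
  have h1 : t - 1 < (List.replicate j 1 ++ sortedS ++ List.replicate a n).length := by
    simp [hlenS]; omega
  rw [getElem!_pos (List.replicate j 1 ++ sortedS ++ List.replicate a n) (t - 1) h1,
    getElem!_pos sortedS (t - (j + 1)) (show t - (j+1) < sortedS.length by omega)]
  rw [List.getElem_append_left (by simp [hlenS]; omega),
    List.getElem_append_right (by simp; omega)]
  simp only [List.length_replicate]
  congr 1
  omega
end
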